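/- Let f be a matrix Schur function on the unit disc (analytic with f(z)†f(z) < 1), α₀ := f(0), and f₁ its Schur transform defined by f₁(z) := z^{-1}(ρ^R)^{-1}(f(z)-α₀)(1-α₀†f(z))^{-1}ρ^L with ρ^R := (1-α₀α₀†)^{1/2}, ρ^L := (1-α₀†α₀)^{1/2}. Then the inverse relation f(z) = (ρ^R)^{-1}·(α₀ + z·f₁(z))·(1 + z·α₀†·f₁(z))^{-1}·ρ^L holds for all z in the disc. -/

import Mathlib

open Matrix
open scoped ComplexOrder

attribute [local instance] Matrix.normedAddCommGroup Matrix.normedSpace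

/-- The positive semidefinite square root of a positive semidefinite matrix
(restored with its former Mathlib definition). -/
noncomputable def Matrix.PosSemidef.sqrt {n 𝕜 : Type*} [Fintype n] [RCLike 𝕜] [DecidableEq n]
    {A : Matrix n n 𝕜} (hA : A.PosSemidef) : Matrix n n 𝕜 :=
  (hA.1.eigenvectorUnitary : Matrix n n 𝕜) * diagonal ((↑) ∘ (√·) ∘ hA.1.eigenvalues) *
    (star hA.1.eigenvectorUnitary : Matrix n n 𝕜)

section SchurAux

open Polynomial

private lemma aux_semiconj_aeval {n : ℕ} (A M N : Matrix (Fin n) (Fin n) ℂ)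
    (h : A * M = N * A) (q : ℝ[X]) :
    A * (aeval M q) = (aeval N q) * A := by
  have h' : SemiconjBy A M N := h
  induction q using Polynomial.induction_on with
  | C r => simp only [aeval_C]; exact (Algebra.commutes r A).symm
  | add p q hp hq => rw [map_add, map_add, mul_add, add_mul, hp, hq]
  | monomial k r _ =>
    rw [_root_.map_mul, _root_.map_mul, map_pow, map_pow, aeval_C, aeval_C, aeval_X, aeval_X]
    have hpow : SemiconjBy A (M ^ (k+1)) (N ^ (k+1)) := h'.pow_right (k+1)
    calc A * (algebraMap ℝ _ r * M ^ (k+1))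
        = algebraMap ℝ _ r * (A * M ^ (k+1)) := by
          rw [← mul_assoc, ← Algebra.commutes r A, mul_assoc]
      _ = algebraMap ℝ _ r * (N ^ (k+1) * A) := by rw [hpow]
      _ = algebraMap ℝ _ r * N ^ (k+1) * A := by rw [mul_assoc]

private lemma aux_sqrt_eq_aeval {n : ℕ} {M : Matrix (Fin n) (Fin n) ℂ}
    (hM : M.PosSemidef) (q : ℝ[X])
    (hq : ∀ x ∈ spectrum ℝ M, q.eval x = Real.sqrt x) :
    hM.sqrt = aeval M q := by
  have h1 : hM.sqrt = hM.1.cfc Real.sqrt := rfl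
  rw [h1, ← Matrix.IsHermitian.cfc_eq hM.1, ← cfc_polynomial q M hM.1]
  exact cfc_congr fun x hx => (hq x hx).symm

lemma Matrix.PosSemidef.sqrt_mul_self {n : ℕ} {M : Matrix (Fin n) (Fin n) ℂ}
    (hM : M.PosSemidef) : hM.sqrt * hM.sqrt = M := by
  have h1 : hM.sqrt = cfc Real.sqrt M := by rw [Matrix.IsHermitian.cfc_eq hM.1]; rfl
  rw [h1, ← cfc_mul Real.sqrt Real.sqrt M]
  conv_rhs => rw [← cfc_id ℝ M hM.1.isSelfAdjoint]
  refine cfc_congr fun x hx => ?_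
  rw [hM.1.spectrum_real_eq_range_eigenvalues] at hx
  obtain ⟨i, rfl⟩ := hx
  exact Real.mul_self_sqrt (hM.eigenvalues_nonneg i)

private lemma aux_intertwine {n : ℕ} {M N A : Matrix (Fin n) (Fin n) ℂ}
    (hM : M.PosSemidef) (hN : N.PosSemidef) (h : A * M = N * A) :
    A * hM.sqrt = hN.sqrt * A := by
  have hfin : (spectrum ℝ M ∪ spectrum ℝ N).Finite :=
    Matrix.finite_real_spectrum.union Matrix.finite_real_spectrum
  set s : Finset ℝ := hfin.toFinset with hs
  set q : ℝ[X] := Lagrange.interpolate s id Real.sqrt with hqdef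
  have hnode : ∀ x ∈ spectrum ℝ M ∪ spectrum ℝ N, q.eval x = Real.sqrt x := by
    intro x hx
    have hxs : x ∈ s := hfin.mem_toFinset.2 hx
    simpa [hqdef] using Lagrange.eval_interpolate_at_node (r := Real.sqrt)
      (Set.injOn_id _) hxs
  rw [aux_sqrt_eq_aeval hM q (fun x hx => hnode x (Or.inl hx)),
    aux_sqrt_eq_aeval hN q (fun x hx => hnode x (Or.inr hx))]
  exact aux_semiconj_aeval A M N h q

private noncomputable def enormE {n : ℕ} (v : Fin n → ℂ) : ℝ :=
  ‖(WithLp.toLp 2 v : EuclideanSpace ℂ (Fin n))‖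

private lemma enormE_nonneg' {n : ℕ} (v : Fin n → ℂ) : 0 ≤ enormE v := norm_nonneg _

private lemma enormE_pos {n : ℕ} {v : Fin n → ℂ} (hv : v ≠ 0) : 0 < enormE v := by
  have : (WithLp.toLp 2 v : EuclideanSpace ℂ (Fin n)) ≠ 0 := by simpa using hv
  exact norm_pos_iff.2 this

private lemma aux_dot_self {n : ℕ} (v : Fin n → ℂ) :
    star v ⬝ᵥ v = ((enormE v : ℝ) : ℂ) ^ 2 := by
  have := inner_self_eq_norm_sq_to_K (𝕜 := ℂ) (WithLp.toLp 2 v : EuclideanSpace ℂ (Fin n))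
  rw [EuclideanSpace.inner_toLp_toLp, dotProduct_comm] at this
  exact this

private lemma aux_dot_cs {n : ℕ} (v w : Fin n → ℂ) :
    ‖star v ⬝ᵥ w‖ ≤ enormE v * enormE w := by
  have := norm_inner_le_norm (𝕜 := ℂ) (WithLp.toLp 2 v : EuclideanSpace ℂ (Fin n))
    (WithLp.toLp 2 w : EuclideanSpace ℂ (Fin n))
  rw [EuclideanSpace.inner_toLp_toLp, dotProduct_comm] at this
  exact this

private lemma aux_quad {n : ℕ} (A : Matrix (Fin n) (Fin n) ℂ) (x : Fin n → ℂ) :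
    star x ⬝ᵥ ((1 - Aᴴ * A) *ᵥ x) = ((enormE x : ℝ) : ℂ) ^ 2 - ((enormE (A *ᵥ x) : ℝ) : ℂ) ^ 2 := by
  rw [Matrix.sub_mulVec, Matrix.one_mulVec, dotProduct_sub, ← Matrix.mulVec_mulVec,
    Matrix.dotProduct_mulVec (star x), ← Matrix.star_mulVec, aux_dot_self, aux_dot_self]

private lemma aux_contract {n : ℕ} {A : Matrix (Fin n) (Fin n) ℂ}
    (hA : ((1 : Matrix (Fin n) (Fin n) ℂ) - Aᴴ * A).PosDef)
    {x : Fin n → ℂ} (hx : x ≠ 0) : enormE (A *ᵥ x) < enormE x := by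
  have h := hA.dotProduct_mulVec_pos hx
  rw [aux_quad] at h
  have : (0:ℂ) < (((enormE x)^2 - (enormE (A *ᵥ x))^2 : ℝ) : ℂ) := by push_cast; linear_combination h
  rw [show (0:ℂ) = ((0:ℝ):ℂ) by norm_num, Complex.real_lt_real, sub_pos] at this
  exact (pow_lt_pow_iff_left₀ (enormE_nonneg' _) (enormE_nonneg' _) (by norm_num)).1 this

private lemma aux_flip {n : ℕ} {A : Matrix (Fin n) (Fin n) ℂ}
    (hA : ((1 : Matrix (Fin n) (Fin n) ℂ) - Aᴴ * A).PosDef) :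
    ((1 : Matrix (Fin n) (Fin n) ℂ) - A * Aᴴ).PosDef := by
  refine Matrix.PosDef.of_dotProduct_mulVec_pos ?_ ?_
  · unfold Matrix.IsHermitian
    simp [Matrix.conjTranspose_sub, Matrix.conjTranspose_mul]
  intro x hx
  have hq : star x ⬝ᵥ ((1 - A * Aᴴ) *ᵥ x)
      = ((enormE x : ℝ) : ℂ) ^ 2 - ((enormE (Aᴴ *ᵥ x) : ℝ) : ℂ) ^ 2 := by
    have := aux_quad Aᴴ x
    rwa [conjTranspose_conjTranspose] at this
  rw [hq]
  set y := Aᴴ *ᵥ x with hy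
  have key : enormE y < enormE x := by
    by_cases hy0 : y = 0
    · rw [hy0]
      have : enormE (0 : Fin n → ℂ) = 0 := norm_zero
      rw [this]
      exact enormE_pos hx
    · have h1 : star y ⬝ᵥ y = star x ⬝ᵥ (A *ᵥ y) := by
        rw [Matrix.dotProduct_mulVec (star x), hy, Matrix.star_mulVec,
          conjTranspose_conjTranspose]
      have h2 : ‖star y ⬝ᵥ y‖ = (enormE y) ^ 2 := by
        rw [aux_dot_self]
        rw [show (((enormE y : ℝ)):ℂ)^2 = (((enormE y)^2 : ℝ) : ℂ) by push_cast; ring]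
        rw [Complex.norm_real, Real.norm_eq_abs, abs_of_nonneg (by positivity)]
      have h3 : ‖star x ⬝ᵥ (A *ᵥ y)‖ ≤ enormE x * enormE (A *ᵥ y) := aux_dot_cs _ _
      have h4 : enormE (A *ᵥ y) < enormE y := aux_contract hA hy0
      have h5 : (enormE y)^2 < enormE x * enormE y := by
        calc (enormE y)^2 = ‖star y ⬝ᵥ y‖ := h2.symm
          _ = ‖star x ⬝ᵥ (A *ᵥ y)‖ := by rw [h1]
          _ ≤ enormE x * enormE (A *ᵥ y) := h3
          _ < enormE x * enormE y := by
              exact mul_lt_mul_of_pos_left h4 (enormE_pos hx)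
      have hypos : 0 < enormE y := enormE_pos hy0
      nlinarith
  have : (0:ℝ) < (enormE x)^2 - (enormE y)^2 := by nlinarith [enormE_nonneg' y]
  calc (0:ℂ) = ((0:ℝ):ℂ) := by norm_num
    _ < (((enormE x)^2 - (enormE y)^2 : ℝ) : ℂ) := by rwa [Complex.real_lt_real]
    _ = ((enormE x : ℝ) : ℂ) ^ 2 - ((enormE y : ℝ) : ℂ) ^ 2 := by push_cast; ring

end SchurAux

/-- Inversion of one step of the matrix Schur algorithm:
`f(z) = (ρ^R)⁻¹ (α₀ + z f₁(z)) (1 + z α₀† f₁(z))⁻¹ ρ^L` on the unit disc. -/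
theorem schur_transform_inverse_relation (p : ℕ)
    (f f₁ : ℂ → Matrix (Fin p) (Fin p) ℂ)
    (hf : AnalyticOnNhd ℂ f (Metric.ball 0 1))
    (hcontr : ∀ z ∈ Metric.ball (0:ℂ) 1,
      ((1 : Matrix (Fin p) (Fin p) ℂ) - (f z)ᴴ * f z).PosDef)
    (hR : ((1 : Matrix (Fin p) (Fin p) ℂ) - f 0 * (f 0)ᴴ).PosSemidef)
    (hL : ((1 : Matrix (Fin p) (Fin p) ℂ) - (f 0)ᴴ * f 0).PosSemidef)
    (hf₁ : AnalyticOnNhd ℂ f₁ (Metric.ball 0 1))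
    (hdef : ∀ z ∈ Metric.ball (0:ℂ) 1, z ≠ 0 →
      f₁ z = z⁻¹ • (hR.sqrt⁻¹ * (f z - f 0) * (1 - (f 0)ᴴ * f z)⁻¹ * hL.sqrt)) :
    ∀ z ∈ Metric.ball (0:ℂ) 1,
      f z = hR.sqrt⁻¹ * (f 0 + z • f₁ z) * (1 + z • ((f 0)ᴴ * f₁ z))⁻¹ * hL.sqrt := by
  have h0mem : (0:ℂ) ∈ Metric.ball (0:ℂ) 1 := Metric.mem_ball_self one_pos
  set α := f 0 with hα
  set R := hR.sqrt with hRdef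
  set L := hL.sqrt with hLdef
  set P : Matrix (Fin p) (Fin p) ℂ := 1 - α * αᴴ with hPdef
  set Q : Matrix (Fin p) (Fin p) ℂ := 1 - αᴴ * α with hQdef
  have hQpd : Q.PosDef := hcontr 0 h0mem
  have hPpd : P.PosDef := aux_flip hQpd
  have hRR : R * R = P := hR.sqrt_mul_self
  have hLL : L * L = Q := hL.sqrt_mul_self
  -- units
  have hdetP : IsUnit P.det := (Matrix.isUnit_iff_isUnit_det _).1 hPpd.isUnit
  have hdetQ : IsUnit Q.det := (Matrix.isUnit_iff_isUnit_det _).1 hQpd.isUnit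
  have hdetR : IsUnit R.det := by
    have : IsUnit (R.det * R.det) := by rw [← Matrix.det_mul, hRR]; exact hdetP
    exact isUnit_of_mul_isUnit_left this
  have hdetL : IsUnit L.det := by
    have : IsUnit (L.det * L.det) := by rw [← Matrix.det_mul, hLL]; exact hdetQ
    exact isUnit_of_mul_isUnit_left this
  -- intertwining
  have hαL : α * L = R * α := by
    refine aux_intertwine hL hR ?_
    simp only [hPdef, hQdef]; noncomm_ring
  have hαR : αᴴ * R = L * αᴴ := by
    refine aux_intertwine hR hL ?_
    simp only [hPdef, hQdef]; noncomm_ring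
  intro z hz
  set F := f z with hF
  set S : Matrix (Fin p) (Fin p) ℂ := 1 - αᴴ * F with hSdef
  have hFcon : ((1 : Matrix (Fin p) (Fin p) ℂ) - Fᴴ * F).PosDef := hcontr z hz
  have hadcon : ((1 : Matrix (Fin p) (Fin p) ℂ) - (αᴴ)ᴴ * αᴴ).PosDef := by
    rwa [conjTranspose_conjTranspose]
  -- S is invertible
  have hdetS : IsUnit S.det := by
    rw [← Matrix.isUnit_iff_isUnit_det]
    rw [← Matrix.mulVec_injective_iff_isUnit]
    intro u v huv
    by_contra hne
    have hv : u - v ≠ 0 := sub_ne_zero.2 hne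
    have hker : S *ᵥ (u - v) = 0 := by rw [Matrix.mulVec_sub, huv, sub_self]
    have heq : u - v = αᴴ *ᵥ (F *ᵥ (u - v)) := by
      have h' := hker
      rw [hSdef, Matrix.sub_mulVec, Matrix.one_mulVec, sub_eq_zero] at h'
      exact h'.trans (Matrix.mulVec_mulVec _ _ _).symm
    set w := F *ᵥ (u - v) with hw
    have hw0 : w ≠ 0 := by
      intro h0
      rw [h0, Matrix.mulVec_zero] at heq
      exact hv heq
    have h1 : enormE (u - v) < enormE w := by
      rw [heq]; exact aux_contract hadcon hw0
    have h2 : enormE w < enormE (u - v) := aux_contract hFcon hv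
    exact absurd (h1.trans h2) (lt_irrefl _)
  by_cases hz0 : z = 0
  · subst hz0
    simp only [zero_smul, add_zero, smul_zero]
    rw [inv_one, Matrix.mul_one]
    refine (Matrix.isUnit_iff_isUnit_det R).2 hdetR |>.mul_left_cancel ?_
    rw [← Matrix.mul_assoc, ← Matrix.mul_assoc, Matrix.mul_nonsing_inv R hdetR,
      Matrix.one_mul, ← hαL]
  -- z ≠ 0
  have hstep : z • f₁ z = R⁻¹ * (F - α) * S⁻¹ * L := by
    rw [hdef z hz hz0, smul_smul, mul_inv_cancel₀ hz0, one_smul]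
  have hA1 : α + z • f₁ z = R⁻¹ * (P * (F * (S⁻¹ * L))) := by
    refine (Matrix.isUnit_iff_isUnit_det R).2 hdetR |>.mul_left_cancel ?_
    rw [Matrix.mul_nonsing_inv_cancel_left _ _ hdetR, Matrix.mul_add, ← hαL, hstep]
    have h2 : R * (R⁻¹ * (F - α) * S⁻¹ * L) = (F - α) * (S⁻¹ * L) := by
      simp only [Matrix.mul_assoc]
      rw [Matrix.mul_nonsing_inv_cancel_left _ _ hdetR]
    rw [h2]
    have h3 : α * L = (α * S) * (S⁻¹ * L) := by
      rw [Matrix.mul_assoc, Matrix.mul_nonsing_inv_cancel_left _ _ hdetS]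
    rw [h3, ← Matrix.add_mul]
    have h4 : α * S + (F - α) = P * F := by
      simp only [hSdef, hPdef]; noncomm_ring
    rw [h4, Matrix.mul_assoc]
  have hE1 : (1 : Matrix (Fin p) (Fin p) ℂ) + z • (αᴴ * f₁ z)
      = L⁻¹ * (Q * (S⁻¹ * L)) := by
    refine (Matrix.isUnit_iff_isUnit_det L).2 hdetL |>.mul_left_cancel ?_
    rw [Matrix.mul_nonsing_inv_cancel_left _ _ hdetL, Matrix.mul_add, Matrix.mul_one]
    have h2 : L * (z • (αᴴ * f₁ z)) = (αᴴ * R) * (z • f₁ z) := by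
      rw [mul_smul_comm, mul_smul_comm, ← Matrix.mul_assoc, ← hαR]
    rw [h2, hstep]
    have h3 : αᴴ * R * (R⁻¹ * (F - α) * S⁻¹ * L) = αᴴ * ((F - α) * (S⁻¹ * L)) := by
      simp only [Matrix.mul_assoc]
      rw [Matrix.mul_nonsing_inv_cancel_left _ _ hdetR]
    rw [h3]
    have h5 : S + αᴴ * (F - α) = Q := by
      simp only [hSdef, hQdef]; noncomm_ring
    rw [← h5, Matrix.add_mul, Matrix.mul_nonsing_inv_cancel_left _ _ hdetS,
      Matrix.mul_assoc]
  have hE2 : ((1 : Matrix (Fin p) (Fin p) ℂ) + z • (αᴴ * f₁ z))⁻¹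
      = L⁻¹ * (S * (Q⁻¹ * L)) := by
    refine Matrix.inv_eq_right_inv ?_
    rw [hE1]
    simp only [Matrix.mul_assoc]
    rw [Matrix.mul_nonsing_inv_cancel_left _ _ hdetL,
      Matrix.nonsing_inv_mul_cancel_left _ _ hdetS,
      Matrix.mul_nonsing_inv_cancel_left _ _ hdetQ,
      Matrix.nonsing_inv_mul _ hdetL]
  rw [hA1, hE2]
  simp only [Matrix.mul_assoc]
  rw [Matrix.mul_nonsing_inv_cancel_left _ _ hdetL,
    Matrix.nonsing_inv_mul_cancel_left _ _ hdetS, hLL,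
    Matrix.nonsing_inv_mul _ hdetQ, Matrix.mul_one, ← hRR]
  simp only [Matrix.mul_assoc]
  rw [Matrix.nonsing_inv_mul_cancel_left _ _ hdetR,
    Matrix.nonsing_inv_mul_cancel_left _ _ hdetR]
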